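/- Chió pivotal condensation: if a_{11} ≠ 0, then det(M) = det(B) / (a_{11})^{n-2}, where B is the (n-1)×(n-1) matrix with entries b_{ij} = a_{11}·a_{i+1,j+1} − a_{1,j+1}·a_{i+1,1}. -/

import Mathlib

open Matrix Finset

lemma chio_aux {K : Type*} [Field K] {m : ℕ} (hm : 1 ≤ m)
    (M : Matrix (Fin (m + 1)) (Fin (m + 1)) K) (h : M 0 0 ≠ 0) :
    M.det =
      (Matrix.of (fun i j : Fin m =>
        M 0 0 * M i.succ j.succ - M 0 j.succ * M i.succ 0)).det / M 0 0 ^ (m - 1) := by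
  set a := M 0 0 with ha
  -- P : scale all rows except row 0 by a
  set P : Matrix (Fin (m + 1)) (Fin (m + 1)) K :=
    Matrix.of (fun i j => (if i = 0 then 1 else a) * M i j) with hP
  have hdetP : P.det = a ^ m * M.det := by
    rw [hP, Matrix.det_mul_column]
    congr 1
    rw [Fin.prod_univ_succ]
    simp [Fin.succ_ne_zero]
  -- N : subtract multiples of row 0
  set N : Matrix (Fin (m + 1)) (Fin (m + 1)) K :=
    Matrix.of (fun i j => if i = 0 then M 0 j else a * M i j - M i 0 * M 0 j) with hN
  have hdetN : N.det = P.det := by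
    apply Matrix.det_eq_of_forall_row_eq_smul_add_const
      (fun i => if i = 0 then 0 else -(M i 0)) 0 (by simp)
    intro i j
    by_cases hi : i = 0 <;> simp [hN, hP, hi, ha]
    ring
  -- expand N along the first column
  have hcol : ∀ i : Fin (m + 1), i ≠ 0 → N i 0 = 0 := by
    intro i hi
    simp [hN, hi, ha, mul_comm]
  have hexp : N.det = a *
      (Matrix.of (fun i j : Fin m =>
        M 0 0 * M i.succ j.succ - M 0 j.succ * M i.succ 0)).det := by
    rw [Matrix.det_succ_column_zero]
    rw [Finset.sum_eq_single 0]
    · simp only [Fin.val_zero, pow_zero, one_mul]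
      have h00 : N 0 0 = a := by simp [hN, ha]
      have hsub : N.submatrix (Fin.succAbove 0) Fin.succ = Matrix.of (fun i j : Fin m =>
          M 0 0 * M i.succ j.succ - M 0 j.succ * M i.succ 0) := by
        ext i j
        simp only [Matrix.submatrix_apply, Matrix.of_apply, hN, Fin.succAbove_zero]
        rw [if_neg (Fin.succ_ne_zero i)]
        rw [← ha]
        ring
      rw [h00, hsub]
    · intro b _ hb
      rw [hcol b hb]; ring
    · intro hb; exact absurd (Finset.mem_univ 0) hb
  have hane : a ≠ 0 := h
  have : a ^ m * M.det = a * (Matrix.of (fun i j : Fin m =>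
        M 0 0 * M i.succ j.succ - M 0 j.succ * M i.succ 0)).det := by
    rw [← hdetP, ← hdetN, hexp]
  obtain ⟨k, rfl⟩ : ∃ k, m = k + 1 := ⟨m - 1, by omega⟩
  simp only [Nat.add_sub_cancel]
  have h2 : a ^ k * M.det = (Matrix.of (fun i j : Fin (k + 1) =>
        M 0 0 * M i.succ j.succ - M 0 j.succ * M i.succ 0)).det :=
    mul_left_cancel₀ hane (by rw [← this]; ring)
  rw [eq_div_iff (pow_ne_zero _ hane)]
  linear_combination h2

/-- Chió pivotal condensation. -/
theorem chio_condensation {K : Type*} [Field K] {n : ℕ} (hn : 2 ≤ n)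
    (M : Matrix (Fin n) (Fin n) K)
    (h : M ⟨0, by omega⟩ ⟨0, by omega⟩ ≠ 0) :
    M.det =
      (Matrix.of (fun i j : Fin (n - 1) =>
        M ⟨0, by omega⟩ ⟨0, by omega⟩ *
          M ⟨i + 1, by have := i.isLt; omega⟩ ⟨j + 1, by have := j.isLt; omega⟩ -
        M ⟨0, by omega⟩ ⟨j + 1, by have := j.isLt; omega⟩ *
          M ⟨i + 1, by have := i.isLt; omega⟩ ⟨0, by omega⟩)).det /
      (M ⟨0, by omega⟩ ⟨0, by omega⟩) ^ (n - 2) := by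
  obtain ⟨m, rfl⟩ : ∃ m, n = m + 1 := ⟨n - 1, by omega⟩
  have hm : 1 ≤ m := by omega
  exact chio_aux hm M h
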